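/- Let f₁, …, f_N : ℝ^d → ℝ be twice continuously differentiable, let θ_i* satisfy ∇f_i(θ_i*) = 0, and write 𝛉* = (θ₁*,…,θ_N*) ∈ ℝ^{dN}. For each t ≥ 0 let ℳ^t ∈ ℝ^{dN×dN} be a symmetric block matrix with d×d diagonal blocks M_{ij}^t, and consider the multi-task gradient descent iteration θ_i^{t+1} = Σ_{j=1}^N M_{ij}^t θ_j^t − α∇f_i(θ_i^t) starting from 𝛉⁰. Let H^t = diag(H₁^t,…,H_N^t) with H_i^t = ∫₀¹ ∇²f_i(θ_i* + μ(θ_i^t − θ_i*)) dμ. Then for every T ≥ 1, ‖𝛉^T − 𝛉*‖ ≤ (∏_{τ=0}^{T−1} ρ(ℳ^τ − αH^τ))·‖𝛉⁰ − 𝛉*‖ + Σ_{τ=0}^{T−1} (∏_{r=τ+1}^{T−1} ρ(ℳ^r − αH^r))·‖(ℳ^τ − I_{dN})𝛉*‖, where empty products equal 1 and ‖·‖ is the Euclidean norm. -/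

import Mathlib

set_option maxHeartbeats 4000000 in
set_option synthInstance.maxHeartbeats 2000000 in
/-- The block operator on `(ℝ^d)^N` (with the Euclidean/ℓ² norm on the concatenation)
determined by an `N × N` array of operators on `ℝ^d`: the `i`-th block of the output is
`∑ j, T i j (x j)`. -/
noncomputable def blockOp {N d : ℕ}
    (T : Fin N → Fin N → (EuclideanSpace ℝ (Fin d) →L[ℝ] EuclideanSpace ℝ (Fin d))) :
    PiLp 2 (fun _ : Fin N => EuclideanSpace ℝ (Fin d)) →L[ℝ]
      PiLp 2 (fun _ : Fin N => EuclideanSpace ℝ (Fin d)) :=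
  LinearMap.toContinuousLinearMap <|
    ((WithLp.linearEquiv 2 ℝ (∀ _ : Fin N, EuclideanSpace ℝ (Fin d))).symm.toLinearMap.comp
      ((LinearMap.pi fun i => ∑ j, (T i j).toLinearMap.comp (LinearMap.proj j)).comp
        (WithLp.linearEquiv 2 ℝ (∀ _ : Fin N, EuclideanSpace ℝ (Fin d))).toLinearMap))

/-- The averaged Hessian of `g` along the segment from `a` to `b`,
`∫₀¹ ∇²g(a + μ(b − a)) dμ`, as a continuous linear map. -/
noncomputable def avgHess {d : ℕ} (g : EuclideanSpace ℝ (Fin d) → ℝ)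
    (a b : EuclideanSpace ℝ (Fin d)) :
    EuclideanSpace ℝ (Fin d) →L[ℝ] EuclideanSpace ℝ (Fin d) :=
  ∫ μ in (0:ℝ)..1, fderiv ℝ (gradient g) (a + μ • (b - a))



lemma gradient_contDiff {d : ℕ} {g : EuclideanSpace ℝ (Fin d) → ℝ} (hg : ContDiff ℝ 2 g) :
    ContDiff ℝ 1 (gradient g) := by
  have h1 : ContDiff ℝ 1 (fderiv ℝ g) := hg.fderiv_right (by norm_num)
  have : gradient g = fun x => (InnerProductSpace.toDual ℝ (EuclideanSpace ℝ (Fin d))).symm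
      (fderiv ℝ g x) := rfl
  rw [this]
  exact (InnerProductSpace.toDual ℝ (EuclideanSpace ℝ (Fin d))).symm.contDiff.comp h1

lemma avgHess_apply_sub {d : ℕ} {g : EuclideanSpace ℝ (Fin d) → ℝ} (hg : ContDiff ℝ 2 g)
    (a b : EuclideanSpace ℝ (Fin d)) :
    avgHess g a b (b - a) = gradient g b - gradient g a := by
  have hgrad := gradient_contDiff hg
  have hdiff : Differentiable ℝ (gradient g) := hgrad.differentiable one_ne_zero
  have hcontf : Continuous (fderiv ℝ (gradient g)) := hgrad.continuous_fderiv one_ne_zero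
  have hγ : Continuous fun μ : ℝ => a + μ • (b - a) := by continuity
  have hcont : Continuous fun μ : ℝ => fderiv ℝ (gradient g) (a + μ • (b - a)) :=
    hcontf.comp hγ
  have hint : IntervalIntegrable (fun μ : ℝ => fderiv ℝ (gradient g) (a + μ • (b - a)))
      MeasureTheory.volume 0 1 := hcont.intervalIntegrable _ _
  rw [avgHess, ContinuousLinearMap.intervalIntegral_apply hint]
  have key : ∀ μ ∈ Set.uIcc (0:ℝ) 1, HasDerivAt (fun μ : ℝ => gradient g (a + μ • (b - a)))
      (fderiv ℝ (gradient g) (a + μ • (b - a)) (b - a)) μ := by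
    intro μ _
    have h1 : HasDerivAt (fun μ : ℝ => a + μ • (b - a)) (b - a) μ := by
      simpa using ((hasDerivAt_id μ).smul_const (b - a)).const_add a
    have h2 := (hdiff (a + μ • (b - a))).hasFDerivAt
    exact h2.comp_hasDerivAt μ h1
  have hint2 : IntervalIntegrable
      (fun μ : ℝ => fderiv ℝ (gradient g) (a + μ • (b - a)) (b - a))
      MeasureTheory.volume 0 1 :=
    (hcont.clm_apply continuous_const).intervalIntegrable _ _
  have := intervalIntegral.integral_eq_sub_of_hasDerivAt key hint2
  simpa using this

lemma blockOp_apply {N d : ℕ}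
    (T : Fin N → Fin N → (EuclideanSpace ℝ (Fin d) →L[ℝ] EuclideanSpace ℝ (Fin d)))
    (x : PiLp 2 (fun _ : Fin N => EuclideanSpace ℝ (Fin d))) (i : Fin N) :
    blockOp T x i = ∑ j, T i j (x j) := by
  simp [blockOp]



/-- For the multi-task gradient descent iteration
`θᵢ^{t+1} = ∑ⱼ Mᵢⱼ^t θⱼ^t − α∇fᵢ(θᵢ^t)` (with each `ℳ^t` a symmetric block matrix with
`d × d` diagonal blocks), writing `H^t = diag(H₁^t, …, H_N^t)` with
`Hᵢ^t = ∫₀¹ ∇²fᵢ(θᵢ* + μ(θᵢ^t − θᵢ*)) dμ`, we have for every `T ≥ 1`: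
`‖𝛉^T − 𝛉*‖ ≤ (∏_{τ<T} ρ(ℳ^τ − αH^τ))·‖𝛉⁰ − 𝛉*‖
  + ∑_{τ<T} (∏_{τ<r<T} ρ(ℳ^r − αH^r))·‖(ℳ^τ − I)𝛉*‖`
(for the symmetric matrices `ℳ^t − αH^t` the spectral radius `ρ` equals the operator
norm). -/
theorem multitask_gd_iterate_bound {d N : ℕ}
    (f : Fin N → EuclideanSpace ℝ (Fin d) → ℝ) (hf : ∀ i, ContDiff ℝ 2 (f i))
    (θstar : PiLp 2 fun _ : Fin N => EuclideanSpace ℝ (Fin d))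
    (hstar : ∀ i, gradient (f i) (θstar i) = 0)
    (M : ℕ → Fin N → Fin N → Matrix (Fin d) (Fin d) ℝ)
    (hMdiag : ∀ t i j, (M t i j).IsDiag)
    (hMsymm : ∀ t i j, M t i j = M t j i)
    (α : ℝ)
    (θ : ℕ → PiLp 2 fun _ : Fin N => EuclideanSpace ℝ (Fin d))
    (hupdate : ∀ t i, θ (t + 1) i =
      (∑ j, Matrix.toEuclideanCLM (𝕜 := ℝ) (M t i j) (θ t j)) - α • gradient (f i) (θ t i))
    (ℳop Hop : ℕ → (PiLp 2 fun _ : Fin N => EuclideanSpace ℝ (Fin d)) →L[ℝ]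
      (PiLp 2 fun _ : Fin N => EuclideanSpace ℝ (Fin d)))
    (hℳop : ∀ t, ℳop t = blockOp fun i j => Matrix.toEuclideanCLM (𝕜 := ℝ) (M t i j))
    (hHop : ∀ t, Hop t = blockOp fun i j =>
      if i = j then avgHess (f i) (θstar i) (θ t i) else 0) :
    ∀ T : ℕ, 1 ≤ T →
      ‖θ T - θstar‖ ≤
        (∏ τ ∈ Finset.range T, ‖ℳop τ - α • Hop τ‖) * ‖θ 0 - θstar‖ +
          ∑ τ ∈ Finset.range T,
            (∏ r ∈ Finset.Ico (τ + 1) T, ‖ℳop r - α • Hop r‖) *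
              ‖(ℳop τ - ContinuousLinearMap.id ℝ
                  (PiLp 2 fun _ : Fin N => EuclideanSpace ℝ (Fin d))) θstar‖

    := by
  have key : ∀ t, θ (t + 1) - θstar = (ℳop t - α • Hop t) (θ t - θstar)
      + (ℳop t - ContinuousLinearMap.id ℝ
          (PiLp 2 fun _ : Fin N => EuclideanSpace ℝ (Fin d))) θstar := by
    intro t
    ext i : 1
    have hH : Hop t (θ t - θstar) i = gradient (f i) (θ t i) := by
      rw [hHop, blockOp_apply]
      rw [Finset.sum_eq_single i]
      · rw [if_pos rfl]
        have : (θ t - θstar) i = θ t i - θstar i := rfl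
        rw [this, avgHess_apply_sub (hf i), hstar i, sub_zero]
      · intro j _ hj
        simp [if_neg (Ne.symm hj)]
      · simp
    simp only [ContinuousLinearMap.sub_apply, ContinuousLinearMap.smul_apply,
      ContinuousLinearMap.id_apply]
    have lhs : (θ (t + 1) - θstar) i = θ (t + 1) i - θstar i := rfl
    have rhs1 : ((ℳop t) (θ t - θstar) - α • (Hop t) (θ t - θstar) +
        ((ℳop t) θstar - θstar)) i
        = (ℳop t) (θ t - θstar) i - α • (Hop t) (θ t - θstar) i +
          ((ℳop t) θstar i - θstar i) := rfl
    rw [lhs, rhs1, hH, hupdate, hℳop, blockOp_apply, blockOp_apply]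
    have : ∀ j, Matrix.toEuclideanCLM (𝕜 := ℝ) (M t i j) ((θ t - θstar) j)
        = Matrix.toEuclideanCLM (𝕜 := ℝ) (M t i j) (θ t j)
          - Matrix.toEuclideanCLM (𝕜 := ℝ) (M t i j) (θstar j) := by
      intro j; rw [show (θ t - θstar) j = θ t j - θstar j from rfl, map_sub]
    simp only [this, Finset.sum_sub_distrib]
    abel
  have main : ∀ T : ℕ,
      ‖θ T - θstar‖ ≤
        (∏ τ ∈ Finset.range T, ‖ℳop τ - α • Hop τ‖) * ‖θ 0 - θstar‖ +
          ∑ τ ∈ Finset.range T,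
            (∏ r ∈ Finset.Ico (τ + 1) T, ‖ℳop r - α • Hop r‖) *
              ‖(ℳop τ - ContinuousLinearMap.id ℝ
                  (PiLp 2 fun _ : Fin N => EuclideanSpace ℝ (Fin d))) θstar‖ := by
    intro T
    induction T with
    | zero =>
      simp only [Finset.range_zero, Finset.prod_empty, Finset.sum_empty, one_mul, add_zero]
      exact le_rfl
    | succ T ih =>
      set A : ℕ → ℝ := fun t => ‖ℳop t - α • Hop t‖ with hA
      set B : ℕ → ℝ := fun t => ‖(ℳop t - ContinuousLinearMap.id ℝ
          (PiLp 2 fun _ : Fin N => EuclideanSpace ℝ (Fin d))) θstar‖ with hB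
      have h1 : ‖θ (T + 1) - θstar‖ ≤ A T * ‖θ T - θstar‖ + B T := by
        rw [key T]
        refine (norm_add_le _ _).trans ?_
        exact add_le_add ((ℳop T - α • Hop T).le_opNorm _) le_rfl
      have h2 : A T * ‖θ T - θstar‖ + B T ≤
          A T * ((∏ τ ∈ Finset.range T, A τ) * ‖θ 0 - θstar‖ +
            ∑ τ ∈ Finset.range T, (∏ r ∈ Finset.Ico (τ + 1) T, A r) * B τ) + B T := by
        have := mul_le_mul_of_nonneg_left ih (norm_nonneg (ℳop T - α • Hop T))
        exact add_le_add this le_rfl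
      refine (h1.trans h2).trans (le_of_eq ?_)
      rw [Finset.prod_range_succ, Finset.sum_range_succ, Finset.Ico_self,
        Finset.prod_empty, mul_add, Finset.mul_sum]
      have hsum : ∀ τ ∈ Finset.range T,
          A T * ((∏ r ∈ Finset.Ico (τ + 1) T, A r) * B τ)
            = (∏ r ∈ Finset.Ico (τ + 1) (T + 1), A r) * B τ := by
        intro τ hτ
        rw [Finset.prod_Ico_succ_top (Nat.succ_le_of_lt (Finset.mem_range.mp hτ))]
        ring
      rw [Finset.sum_congr rfl hsum]
      ring
  exact fun T _ => main T
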